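/- Profit is a BEST objective for subadditive rewards: Let (A, f, c) be a multi-agent contract instance with subadditive f. Then for every S ⊆ A and every i ∈ S: (a) p({i}) ≤ p(S); and (b) if moreover p(S) ≤ 1, then g(S) ≤ f(S∖{i}) + g({i}), where g(T) = (1 − p(T))·f(T). -/

import Mathlib

open scoped BigOperators ENNReal
open Finset

/-- Marginal contribution of agent `i` to set `S`: `f_S(i) = f(S) - f(S \ {i})`. -/
noncomputable def marginal {α : Type*} [DecidableEq α] (f : Finset α → ℝ) (S : Finset α)
    (i : α) : ℝ :=
  f S - f (S.erase i)

/-- Payment needed to incentivize `S`, valued in `[0,∞]`, with the conventions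
`0/0 = 0` and `x/0 = ∞` for `x > 0` (these hold for ENNReal division). -/
noncomputable def payment {α : Type*} [DecidableEq α] (f : Finset α → ℝ) (c : α → ℝ)
    (S : Finset α) : ℝ≥0∞ :=
  ∑ i ∈ S, ENNReal.ofReal (c i) / ENNReal.ofReal (marginal f S i)

/-- The principal's profit from incentivizing `S`: `g(S) = (1 - p(S)) · f(S)`. -/
noncomputable def profit {α : Type*} [DecidableEq α] (f : Finset α → ℝ) (c : α → ℝ)
    (S : Finset α) : ℝ :=
  (1 - (payment f c S).toReal) * f S

/-- `f` is monotone. -/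
def IsMonotoneFn {α : Type*} (f : Finset α → ℝ) : Prop :=
  ∀ ⦃S T : Finset α⦄, S ⊆ T → f S ≤ f T

/-- `f` is subadditive. -/
def IsSubadditive {α : Type*} [DecidableEq α] (f : Finset α → ℝ) : Prop :=
  ∀ S T : Finset α, f (S ∪ T) ≤ f S + f T

/-- `f` is submodular (decreasing marginal values). -/
def IsSubmodular {α : Type*} [DecidableEq α] (f : Finset α → ℝ) : Prop :=
  ∀ ⦃S T : Finset α⦄, S ⊆ T → ∀ i ∉ T, f (insert i T) - f T ≤ f (insert i S) - f S

/-- `f` is additive. -/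
def IsAdditive {α : Type*} [DecidableEq α] (f : Finset α → ℝ) : Prop :=
  ∀ S : Finset α, f S = ∑ i ∈ S, f {i}

/-- `f` is XOS: a finite max of nonnegative additive functions. -/
def IsXOS {α : Type*} (f : Finset α → ℝ) : Prop :=
  ∃ (k : ℕ) (a : Fin (k + 1) → α → ℝ),
    (∀ j i, 0 ≤ a j i) ∧
    ∀ S : Finset α, f S = Finset.univ.sup' Finset.univ_nonempty (fun j => ∑ i ∈ S, a j i)

/-- Agent `i` is light: it can be incentivized with payment at most `1/2`. -/
def isLight {α : Type*} [DecidableEq α] (f : Finset α → ℝ) (c : α → ℝ) (i : α) : Prop :=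
  payment f c {i} ≤ ENNReal.ofReal (1 / 2)

/-- `S` is budget-feasible for budget `B`. -/
def feasible {α : Type*} [DecidableEq α] (f : Finset α → ℝ) (c : α → ℝ) (B : ℝ)
    (S : Finset α) : Prop :=
  payment f c S ≤ ENNReal.ofReal B

/-- `S` is a budget-feasible set of light agents. -/
def feasibleLight {α : Type*} [DecidableEq α] (f : Finset α → ℝ) (c : α → ℝ) (B : ℝ)
    (S : Finset α) : Prop :=
  (∀ i ∈ S, isLight f c i) ∧ payment f c S ≤ ENNReal.ofReal B

/-- The maximum (supremum) value of objective `φ` over sets satisfying `P`. -/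
noncomputable def maxVal {α : Type*} (φ : Finset α → ℝ) (P : Finset α → Prop) : ℝ :=
  sSup (φ '' {S | P S})

/-- `φ` is a BEST objective for the instance `(f, c)`: it is nonnegative, sandwiched between
profit and reward, and satisfies `φ(S) ≤ f(S \ {i}) + φ({i})` for `i ∈ S`. -/
def IsBEST {α : Type*} [DecidableEq α] (f : Finset α → ℝ) (c : α → ℝ)
    (φ : Finset α → ℝ) : Prop :=
  (∀ S, 0 ≤ φ S) ∧
  (∀ S, φ S ≤ f S) ∧
  (∀ S, payment f c S ≤ 1 → (1 - (payment f c S).toReal) * f S ≤ φ S) ∧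
  (∀ S, ∀ i ∈ S, φ S ≤ f (S.erase i) + φ {i})

/-- `φ` is a BEST objective for the instance `(f, c)` restricted to sets satisfying `P`. -/
def IsBESTOn {α : Type*} [DecidableEq α] (f : Finset α → ℝ) (c : α → ℝ)
    (P : Finset α → Prop) (φ : Finset α → ℝ) : Prop :=
  (∀ S, P S → 0 ≤ φ S) ∧
  (∀ S, P S → φ S ≤ f S) ∧
  (∀ S, P S → payment f c S ≤ 1 → (1 - (payment f c S).toReal) * f S ≤ φ S) ∧
  (∀ S, P S → ∀ i ∈ S, φ S ≤ f (S.erase i) + φ {i})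

/-- **Profit is a BEST objective for subadditive rewards.** -/
theorem profit_is_BEST {α : Type*} [DecidableEq α] [Fintype α]
    (f : Finset α → ℝ) (c : α → ℝ)
    (hf01 : ∀ S, f S ∈ Set.Icc (0 : ℝ) 1) (hf0 : f ∅ = 0)
    (hsubadd : IsSubadditive f) (hc : ∀ i, 0 ≤ c i)
    (S : Finset α) (i : α) (hi : i ∈ S) :
    payment f c {i} ≤ payment f c S ∧
      (payment f c S ≤ 1 → profit f c S ≤ f (S.erase i) + profit f c {i}) := by
  -- marginal of i in S is at most f {i}
  have hmi : marginal f S i ≤ f {i} := by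
    have hsub := hsubadd (S.erase i) {i}
    rw [Finset.union_comm, ← Finset.insert_eq, Finset.insert_erase hi] at hsub
    unfold marginal; linarith
  have hsingle : payment f c {i} = ENNReal.ofReal (c i) / ENNReal.ofReal (f {i}) := by
    unfold payment
    rw [Finset.sum_singleton]
    unfold marginal
    rw [Finset.erase_singleton, hf0]
    ring_nf
  have hpay : payment f c {i} ≤ payment f c S := by
    rw [hsingle]
    calc ENNReal.ofReal (c i) / ENNReal.ofReal (f {i})
        ≤ ENNReal.ofReal (c i) / ENNReal.ofReal (marginal f S i) :=
          ENNReal.div_le_div_left (ENNReal.ofReal_le_ofReal hmi) _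
      _ ≤ payment f c S :=
          Finset.single_le_sum
            (f := fun j => ENNReal.ofReal (c j) / ENNReal.ofReal (marginal f S j))
            (fun _ _ => zero_le) hi
  refine ⟨hpay, fun hle1 => ?_⟩
  have hne : payment f c S ≠ ⊤ := ne_top_of_le_ne_top (by simp) hle1
  set P := (payment f c S).toReal with hP
  set Q := (payment f c {i}).toReal with hQ
  have hP1 : P ≤ 1 := by
    rw [hP]
    exact ENNReal.toReal_le_of_le_ofReal one_pos.le (by simpa using hle1)
  have hQP : Q ≤ P := ENNReal.toReal_mono hne hpay
  have hQ0 : 0 ≤ Q := ENNReal.toReal_nonneg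
  have hfS : f S ≤ f (S.erase i) + f {i} := by
    have hsub := hsubadd (S.erase i) {i}
    rwa [Finset.union_comm, ← Finset.insert_eq, Finset.insert_erase hi] at hsub
  have h1 : 0 ≤ f (S.erase i) := (hf01 _).1
  have h2 : 0 ≤ f {i} := (hf01 _).1
  unfold profit
  rw [← hP, ← hQ]
  nlinarith [mul_le_mul_of_nonneg_left hfS (by linarith : (0:ℝ) ≤ 1 - P),
    mul_le_mul_of_nonneg_right hQP h2, mul_le_mul_of_nonneg_right hP1 h1]
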